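/- Let q ≥ 3 be an integer and n, K, d positive integers with K > 1 satisfying the quantum Singleton bound log_q K ≤ n - 2d + 2, and suppose log_q K + d ≤ (1 - δ)n where δ = 2e/q². Let t = ⌊(d-1)/2⌋. Then K ≤ q^n / (Σ_{j=0}^{t} binomial(n,j)·(q²-1)^j). -/

import Mathlib

open Real Finset

private lemma stmt_7_key (A B L D T : ℝ) (hL1 : 1 < L) (hB0 : 0 ≤ B) (hT : 0 ≤ T)
    (hdt : 2 * T + 1 ≤ D) (hA1 : (2 * D - 2) * L ≤ A) (hA2 : D * L + 2 * B * L ≤ A) :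
    T * (4 * L - 1) + B ≤ A := by
  have hL0 : (0 : ℝ) < L := by linarith
  have h1 : 0 ≤ (A - (2 * D - 2) * L) * (2 * L - 1) :=
    mul_nonneg (by linarith) (by linarith)
  have h3 : 0 ≤ (D - (2 * T + 1)) * (4 * L ^ 2 - L) :=
    mul_nonneg (by linarith) (by nlinarith)
  have e2 : (2 * L - 1) * ((2 * D - 2) * L) + (D * L + 2 * B * L) ≤ 2 * L * A := by
    nlinarith [h1, hA2]
  have e3 : 2 * L * (T * (4 * L - 1) + B) + L
      ≤ (2 * L - 1) * ((2 * D - 2) * L) + (D * L + 2 * B * L) := by nlinarith [h3]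
  nlinarith [e2, e3, hL0]

set_option maxHeartbeats 1000000 in
theorem stmt_7 (q n K d : ℕ) (hq : 3 ≤ q) (hn : 0 < n) (hK : 1 < K) (hd : 0 < d)
    (hSingleton : Real.logb q K ≤ (n : ℝ) - 2 * d + 2)
    (hkd : Real.logb q K + d ≤ (1 - 2 * Real.exp 1 / (q : ℝ) ^ 2) * n)
    (t : ℕ) (ht : t = (d - 1) / 2) :
    (K : ℝ) ≤ (q : ℝ) ^ n / ∑ j ∈ Finset.range (t + 1),
      (n.choose j : ℝ) * ((q : ℝ) ^ 2 - 1) ^ j := by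
  have hq1 : (1 : ℝ) < q := by exact_mod_cast lt_of_lt_of_le (by norm_num) hq
  have hq3 : (3 : ℝ) ≤ q := by exact_mod_cast hq
  have hq0 : (0 : ℝ) < q := by linarith
  have hK1 : (1 : ℝ) < K := by exact_mod_cast hK
  have hK0 : (0 : ℝ) < K := by linarith
  -- L = log q ≥ 1
  set L : ℝ := Real.log q with hLdef
  have hL0 : 0 < L := Real.log_pos hq1
  have hL1 : 1 < L := by
    have h1 : Real.exp 1 < 3 := by
      have := Real.exp_one_lt_d9; linarith
    have : Real.exp 1 < (q : ℝ) := lt_of_lt_of_le h1 hq3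
    calc (1 : ℝ) = Real.log (Real.exp 1) := (Real.log_exp 1).symm
      _ < L := Real.log_lt_log (Real.exp_pos 1) this
  -- logb basics
  have hlogb : Real.logb q K = Real.log K / L := rfl
  have hlogbpos : 0 < Real.logb q K := Real.logb_pos hq1 hK1
  -- nat facts: 2d ≤ n+1
  have h2d : 2 * d ≤ n + 1 := by
    have h : (0 : ℝ) < (n : ℝ) - 2 * d + 2 := lt_of_lt_of_le hlogbpos hSingleton
    have : (2 * d : ℝ) < (n : ℝ) + 2 := by push_cast; linarith
    have : (2 * d : ℕ) < n + 2 := by exact_mod_cast this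
    omega
  have hdt : 2 * t + 1 ≤ d := by omega
  have htn : t ≤ n := by omega
  -- x = q² - 1
  set x : ℝ := (q : ℝ) ^ 2 - 1 with hxdef
  have hx8 : (8 : ℝ) ≤ x := by nlinarith
  have hx0 : 0 < x := by linarith
  have hxq : x ≤ (q : ℝ) ^ 2 := by nlinarith
  -- s = e / (q² x)
  have hqsq : (0 : ℝ) < (q : ℝ) ^ 2 := by positivity
  set s : ℝ := Real.exp 1 / ((q : ℝ) ^ 2 * x) with hsdef
  have hs0 : 0 < s := by positivity
  have he3 : Real.exp 1 < 3 := by have := Real.exp_one_lt_d9; linarith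
  have hs1 : s ≤ 1 := by
    rw [hsdef, div_le_one (by positivity)]
    nlinarith
  have hxs : x * s = Real.exp 1 / (q : ℝ) ^ 2 := by
    rw [hsdef]; field_simp
  -- S = the sum
  set S : ℝ := ∑ j ∈ Finset.range (t + 1), (n.choose j : ℝ) * x ^ j with hSdef
  have hS1 : (1 : ℝ) ≤ S := by
    have h0 : (0 : ℕ) ∈ Finset.range (t + 1) := by simp
    have := Finset.single_le_sum (f := fun j => (n.choose j : ℝ) * x ^ j)
      (fun i _ => by positivity) h0
    simpa using this
  have hS0 : (0 : ℝ) < S := by linarith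
  -- Chernoff: S * s^t ≤ (x*s + 1)^n
  have hchern : S * s ^ t ≤ (x * s + 1) ^ n := by
    have step1 : S * s ^ t ≤ ∑ j ∈ Finset.range (t + 1), (n.choose j : ℝ) * (x * s) ^ j := by
      rw [hSdef, Finset.sum_mul]
      apply Finset.sum_le_sum
      intro j hj
      have hjt : j ≤ t := by
        have := Finset.mem_range.mp hj; omega
      have hst : s ^ t ≤ s ^ j := pow_le_pow_of_le_one hs0.le hs1 hjt
      have : (n.choose j : ℝ) * x ^ j * s ^ t ≤ (n.choose j : ℝ) * x ^ j * s ^ j := by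
        apply mul_le_mul_of_nonneg_left hst (by positivity)
      calc (n.choose j : ℝ) * x ^ j * s ^ t ≤ (n.choose j : ℝ) * x ^ j * s ^ j := this
        _ = (n.choose j : ℝ) * (x * s) ^ j := by rw [mul_pow]; ring
    have step2 : ∑ j ∈ Finset.range (t + 1), (n.choose j : ℝ) * (x * s) ^ j
        ≤ ∑ j ∈ Finset.range (n + 1), (n.choose j : ℝ) * (x * s) ^ j := by
      apply Finset.sum_le_sum_of_subset_of_nonneg
      · exact Finset.range_subset_range.mpr (by omega)
      · intro i _ _; positivity
    have step3 : ∑ j ∈ Finset.range (n + 1), (n.choose j : ℝ) * (x * s) ^ j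
        = (x * s + 1) ^ n := by
      rw [add_pow]
      apply Finset.sum_congr rfl
      intro j hj
      simp [mul_comm]
    linarith
  -- take logs
  have hxs0 : 0 < x * s := by positivity
  have hlogchern : Real.log S + (t : ℝ) * Real.log s ≤ (n : ℝ) * Real.log (x * s + 1) := by
    have h1 : Real.log (S * s ^ t) ≤ Real.log ((x * s + 1) ^ n) :=
      Real.log_le_log (by positivity) hchern
    rw [Real.log_mul (by positivity) (by positivity), Real.log_pow, Real.log_pow] at h1
    push_cast at h1
    linarith
  have hlog1 : Real.log (x * s + 1) ≤ Real.exp 1 / (q : ℝ) ^ 2 := by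
    have := Real.log_le_sub_one_of_pos (show (0:ℝ) < x * s + 1 by linarith)
    rw [hxs] at this ⊢
    linarith
  have hlogs : -Real.log s ≤ 4 * L - 1 := by
    have hqx0 : (0 : ℝ) < (q : ℝ) ^ 2 * x := by positivity
    have h1 : Real.log s = 1 - Real.log ((q : ℝ) ^ 2 * x) := by
      rw [hsdef, Real.log_div (by positivity) (ne_of_gt hqx0), Real.log_exp]
    have h2 : Real.log ((q : ℝ) ^ 2 * x) ≤ Real.log ((q : ℝ) ^ 4) := by
      apply Real.log_le_log hqx0
      nlinarith
    have h3 : Real.log ((q : ℝ) ^ 4) = 4 * L := by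
      rw [Real.log_pow]; push_cast; ring
    linarith
  -- B = e n / q²
  set B : ℝ := (n : ℝ) * Real.exp 1 / (q : ℝ) ^ 2 with hBdef
  have hB0 : 0 ≤ B := by positivity
  have hlogS : Real.log S ≤ (t : ℝ) * (4 * L - 1) + B := by
    have h1 : (n : ℝ) * Real.log (x * s + 1) ≤ B := by
      calc (n : ℝ) * Real.log (x * s + 1) ≤ (n : ℝ) * (Real.exp 1 / (q : ℝ) ^ 2) :=
            mul_le_mul_of_nonneg_left hlog1 (by positivity)
        _ = B := by rw [hBdef]; ring
    have h2 : (t : ℝ) * (-Real.log s) ≤ (t : ℝ) * (4 * L - 1) :=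
      mul_le_mul_of_nonneg_left hlogs (by positivity)
    linarith [hlogchern, h1, h2]
  -- A = n L - log K
  set A : ℝ := (n : ℝ) * L - Real.log K with hAdef
  have hA1 : (2 * (d : ℝ) - 2) * L ≤ A := by
    have h := hSingleton
    rw [hlogb, div_le_iff₀ hL0] at h
    rw [hAdef]; nlinarith [h, hL0]
  have hA2 : (d : ℝ) * L + 2 * B * L ≤ A := by
    have h := hkd
    rw [hlogb] at h
    have h' : Real.log K / L ≤ (1 - 2 * Real.exp 1 / (q : ℝ) ^ 2) * n - d := by linarith
    rw [div_le_iff₀ hL0] at h'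
    rw [hAdef, hBdef]
    have hexp : ((1 - 2 * Real.exp 1 / (q : ℝ) ^ 2) * n - d) * L
        = (n : ℝ) * L - (d : ℝ) * L - 2 * ((n : ℝ) * Real.exp 1 / (q : ℝ) ^ 2) * L := by
      field_simp; ring
    nlinarith [h']
  -- key combination
  have hdtR : (2 * (t : ℝ) + 1) ≤ (d : ℝ) := by exact_mod_cast hdt
  have key : (t : ℝ) * (4 * L - 1) + B ≤ A :=
    stmt_7_key A B L (d : ℝ) (t : ℝ) hL1 hB0 (by positivity) hdtR hA1 hA2
  -- conclude
  have hfinal : Real.log K + Real.log S ≤ (n : ℝ) * L := by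
    rw [hAdef] at key; linarith
  have hKS : (K : ℝ) * S ≤ (q : ℝ) ^ n := by
    have h1 : Real.log ((K : ℝ) * S) ≤ Real.log ((q : ℝ) ^ n) := by
      rw [Real.log_mul (ne_of_gt hK0) (ne_of_gt hS0), Real.log_pow]
      push_cast
      linarith
    calc (K : ℝ) * S = Real.exp (Real.log ((K : ℝ) * S)) :=
          (Real.exp_log (by positivity)).symm
      _ ≤ Real.exp (Real.log ((q : ℝ) ^ n)) := Real.exp_le_exp.mpr h1
      _ = (q : ℝ) ^ n := Real.exp_log (by positivity)
  rw [le_div_iff₀ hS0]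
  exact hKS
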